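/- Let A be a Hermitian n×n complex matrix and let L be a cyclic subspace for A, i.e. a subspace of ℂⁿ with span{ A^k x : k ∈ ℕ, x ∈ L } = ℂⁿ. Then there exists a vector g ∈ L such that for every eigenvalue λ of A the orthogonal projection of g onto the eigenspace ker(A − λI) is nonzero; i.e. L contains a vector of maximal type for the resolution of identity of A. -/

import Mathlib

open MeasureTheory Module

/-- The self-adjoint endomorphism of `ℂⁿ` (with the Euclidean inner product)
associated with a matrix `A`. -/
noncomputable def matEnd (n : ℕ) (A : Matrix (Fin n) (Fin n) ℂ) :
    Module.End ℂ (EuclideanSpace ℂ (Fin n)) :=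
  Matrix.toEuclideanLin A

/-- **Existence of a vector of maximal type in a cyclic subspace.**
Let `A` be a Hermitian `n × n` matrix and `L` a cyclic subspace for `A`
(`span {A^k x : k ∈ ℕ, x ∈ L} = ℂⁿ`).  Then `L` contains a vector `g` whose
orthogonal projection onto every eigenspace `ker (A - λ)` of `A` is nonzero,
i.e. a vector of maximal type for the resolution of identity of `A`. -/
theorem stmt_6 (n : ℕ) (A : Matrix (Fin n) (Fin n) ℂ) (hA : A.IsHermitian)
    (L : Submodule ℂ (EuclideanSpace ℂ (Fin n)))
    (hL : (⨆ k : ℕ, Submodule.map (matEnd n A ^ k) L) = ⊤) :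
    ∃ g ∈ L, ∀ μ : ℂ, (matEnd n A).HasEigenvalue μ →
      Submodule.orthogonalProjectionOnto ((matEnd n A).eigenspace μ) g ≠ 0 := by
  classical
  set T := matEnd n A with hTdef
  have hsym : T.IsSymmetric := Matrix.isHermitian_iff_isSymmetric.mp hA
  -- the "bad" subspaces of `L`
  let p : T.Eigenvalues → Submodule ℂ L :=
    fun μ => ((T.eigenspace (μ : ℂ))ᗮ).comap L.subtype
  -- each bad subspace is proper
  have hproper : ∀ μ : T.Eigenvalues, p μ ≠ ⊤ := by
    intro μ htop
    -- `L ≤ (eigenspace μ)ᗮ`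
    have hLle : L ≤ (T.eigenspace (μ : ℂ))ᗮ := by
      intro x hx
      have : (⟨x, hx⟩ : L) ∈ p μ := htop ▸ Submodule.mem_top
      exact this
    -- the orthogonal complement is `T`-invariant
    have hinv : ∀ x ∈ (T.eigenspace (μ : ℂ))ᗮ, T x ∈ (T.eigenspace (μ : ℂ))ᗮ := by
      intro x hx
      rw [Submodule.mem_orthogonal] at hx ⊢
      intro u hu
      have hu' : T u = (μ : ℂ) • u := Module.End.mem_eigenspace_iff.mp hu
      calc inner ℂ u (T x) = inner ℂ (T u) x := (hsym u x).symm
        _ = inner ℂ ((μ : ℂ) • u) x := by rw [hu']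
        _ = (starRingEnd ℂ) (μ : ℂ) * inner ℂ u x := by rw [inner_smul_left]
        _ = 0 := by rw [hx u hu, mul_zero]
    -- hence all iterates of `L` stay in the complement
    have hiter : ∀ k : ℕ, Submodule.map (T ^ k) L ≤ (T.eigenspace (μ : ℂ))ᗮ := by
      intro k
      induction k with
      | zero => rintro y ⟨x, hxL, rfl⟩; simpa using hLle hxL
      | succ m ih =>
        rintro y ⟨x, hxL, rfl⟩
        have : (T ^ m) x ∈ (T.eigenspace (μ : ℂ))ᗮ := ih ⟨x, hxL, rfl⟩
        have := hinv _ this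
        simpa [pow_succ', Module.End.mul_apply] using this
    have htop' : (⊤ : Submodule ℂ (EuclideanSpace ℂ (Fin n))) ≤ (T.eigenspace (μ : ℂ))ᗮ := by
      rw [← hL]; exact iSup_le hiter
    -- but the eigenspace is nontrivial
    obtain ⟨v, hv⟩ := Module.End.HasEigenvalue.exists_hasEigenvector μ.2
    have hv0 : v ≠ 0 := hv.2
    have hvmem : v ∈ (T.eigenspace (μ : ℂ))ᗮ := htop' Submodule.mem_top
    have : (inner ℂ v v : ℂ) = 0 := (Submodule.mem_orthogonal _ _).mp hvmem v hv.1
    exact hv0 (inner_self_eq_zero.mp this)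
  -- a vector space over an infinite field is not a finite union of proper subspaces
  have hcover : (⋃ μ : T.Eigenvalues, ((p μ : Submodule ℂ L) : Set L)) ≠ Set.univ := by
    intro hc
    obtain ⟨μ, hμ⟩ := Subspace.exists_eq_top_of_iUnion_eq_univ hc
    exact hproper μ hμ
  obtain ⟨g, hg⟩ := Set.ne_univ_iff_exists_notMem _ |>.mp hcover
  refine ⟨(g : EuclideanSpace ℂ (Fin n)), g.2, ?_⟩
  intro μ hμ
  intro h0
  apply hg
  refine Set.mem_iUnion.mpr ⟨⟨μ, hμ⟩, ?_⟩
  show g ∈ p ⟨μ, hμ⟩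
  have : (g : EuclideanSpace ℂ (Fin n)) ∈ (T.eigenspace μ)ᗮ :=
    Submodule.orthogonalProjectionOnto_eq_zero_iff.mp h0
  exact this
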